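/- Let k ≥ 2 be an integer and let x₀, x₁, x₂ be i.i.d. random variables uniformly distributed on {1, 2, ..., k}. Then E(|x₁ - x₀| · |x₂ - x₁|²) = (k - 1)(k + 1)(11k² - 14)/(180k). -/

import Mathlib

open MeasureTheory ProbabilityTheory
open scoped ENNReal

/-- The uniform probability measure on the integers `{1, ..., k}` (as a measure on `ℕ`). -/
noncomputable def unifMeasure (k : ℕ) : Measure ℕ :=
  (k : ℝ≥0∞)⁻¹ • ∑ i ∈ Finset.Icc 1 k, Measure.dirac i

section Helpers

variable {α β : Type*} [MeasurableSpace α] [MeasurableSpace β]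

lemma smul_prod_left' (c : ℝ≥0∞) (μ : Measure α) (ν : Measure β) [SFinite μ] [SFinite ν] :
    (c • μ).prod ν = c • (μ.prod ν) := by
  ext s hs
  rw [Measure.prod_apply hs, Measure.smul_apply, Measure.prod_apply hs,
    lintegral_smul_measure, smul_eq_mul]

lemma smul_prod_right' (c : ℝ≥0∞) (hc : c ≠ ⊤) (μ : Measure α) (ν : Measure β)
    [SFinite μ] [SFinite ν] :
    μ.prod (c • ν) = c • (μ.prod ν) := by
  ext s hs
  rw [Measure.prod_apply hs, Measure.smul_apply, Measure.prod_apply hs, smul_eq_mul,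
    ← lintegral_const_mul' _ _ hc]
  simp only [Measure.smul_apply, smul_eq_mul]

lemma sum_prod_left' {ι : Type*} (s : Finset ι) (m : ι → Measure α) (ν : Measure β) [SFinite ν] :
    (∑ i ∈ s, m i).prod ν = ∑ i ∈ s, (m i).prod ν := by
  rw [← Measure.sum_coe_finset, Measure.prod_sum_left,
    Measure.sum_coe_finset s (fun i => (m i).prod ν)]

lemma sum_prod_right' {ι : Type*} (s : Finset ι) (μ : Measure α) (m : ι → Measure β)
    [∀ i, SFinite (m i)] :
    μ.prod (∑ i ∈ s, m i) = ∑ i ∈ s, μ.prod (m i) := by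
  rw [← Measure.sum_coe_finset, Measure.prod_sum_right,
    Measure.sum_coe_finset s (fun i => μ.prod (m i))]

lemma prod_smul_sum_dirac (c d : ℝ≥0∞) (hd : d ≠ ⊤) (s : Finset α) (t : Finset β) :
    (c • ∑ i ∈ s, Measure.dirac i).prod (d • ∑ j ∈ t, Measure.dirac j)
      = (c * d) • ∑ p ∈ s ×ˢ t, Measure.dirac p := by
  rw [smul_prod_left', smul_prod_right' d hd, sum_prod_left', smul_smul]
  congr 1
  rw [Finset.sum_product]
  refine Finset.sum_congr rfl fun i _ => ?_
  rw [sum_prod_right']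
  exact Finset.sum_congr rfl fun j _ => Measure.dirac_prod_dirac

lemma integrable_dirac' [MeasurableSingletonClass α] (f : α → ℝ) (a : α) :
    Integrable f (Measure.dirac a) :=
  (integrable_const (f a)).congr (ae_eq_dirac f).symm

lemma integral_smul_sum_dirac [MeasurableSingletonClass α] (c : ℝ≥0∞) (s : Finset α)
    (f : α → ℝ) :
    ∫ a, f a ∂(c • ∑ i ∈ s, Measure.dirac i) = c.toReal * ∑ i ∈ s, f i := by
  rw [integral_smul_measure,
    integral_finset_sum_measure (fun i _ => integrable_dirac' f i)]
  simp [integral_dirac, smul_eq_mul]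

lemma sum_quartic (c4 c3 c2 c1 c0 : ℝ) (n : ℕ) :
    ∑ b ∈ Finset.Icc 1 n,
        (c4 * (b : ℝ) ^ 4 + c3 * (b : ℝ) ^ 3 + c2 * (b : ℝ) ^ 2 + c1 * (b : ℝ) + c0)
      = c4 * ((n : ℝ) ^ 5 / 5 + (n : ℝ) ^ 4 / 2 + (n : ℝ) ^ 3 / 3 - (n : ℝ) / 30)
        + c3 * ((n : ℝ) ^ 4 / 4 + (n : ℝ) ^ 3 / 2 + (n : ℝ) ^ 2 / 4)
        + c2 * ((n : ℝ) ^ 3 / 3 + (n : ℝ) ^ 2 / 2 + (n : ℝ) / 6)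
        + c1 * ((n : ℝ) ^ 2 / 2 + (n : ℝ) / 2) + c0 * (n : ℝ) := by
  induction n with
  | zero => simp
  | succ n ih =>
    rw [Finset.sum_Icc_succ_top (Nat.le_add_left 1 n), ih]
    push_cast
    ring

lemma Asum {k b : ℕ} (hb1 : 1 ≤ b) (hbk : b ≤ k) :
    ∑ a ∈ Finset.Icc 1 k, |(b : ℝ) - (a : ℝ)|
      = (b : ℝ) ^ 2 - ((k : ℝ) + 1) * (b : ℝ) + (k : ℝ) * ((k : ℝ) + 1) / 2 := by
  have h0 : ∀ n : ℕ, Finset.Icc 1 n = Finset.Ioc 0 n := fun n => Finset.Icc_add_one_left_eq_Ioc 0 n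
  rw [h0, ← Finset.sum_Ioc_consecutive _ (Nat.zero_le b) hbk]
  have e1 : ∑ a ∈ Finset.Ioc 0 b, |(b : ℝ) - (a : ℝ)|
      = ∑ a ∈ Finset.Ioc 0 b, ((b : ℝ) - (a : ℝ)) := by
    refine Finset.sum_congr rfl fun a ha => ?_
    have : (a : ℝ) ≤ (b : ℝ) := Nat.cast_le.2 (Finset.mem_Ioc.1 ha).2
    rw [abs_of_nonneg (by linarith)]
  have e2 : ∑ a ∈ Finset.Ioc b k, |(b : ℝ) - (a : ℝ)|
      = ∑ a ∈ Finset.Ioc b k, ((a : ℝ) - (b : ℝ)) := by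
    refine Finset.sum_congr rfl fun a ha => ?_
    have : (b : ℝ) ≤ (a : ℝ) := Nat.cast_le.2 (le_of_lt (Finset.mem_Ioc.1 ha).1)
    rw [abs_sub_comm, abs_of_nonneg (by linarith)]
  have hsum : ∀ n : ℕ, ∑ a ∈ Finset.Ioc 0 n, (a : ℝ) = (n : ℝ) * ((n : ℝ) + 1) / 2 := by
    intro n
    have := sum_quartic 0 0 0 1 0 n
    simp only [zero_mul, one_mul, zero_add, add_zero, mul_zero] at this
    rw [h0] at this
    rw [this]; ring
  have hsum2 : ∑ a ∈ Finset.Ioc b k, (a : ℝ)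
      = (k : ℝ) * ((k : ℝ) + 1) / 2 - (b : ℝ) * ((b : ℝ) + 1) / 2 := by
    have hc := Finset.sum_Ioc_consecutive (fun a : ℕ => (a : ℝ)) (Nat.zero_le b) hbk
    have h1 := hsum b
    have h2 := hsum k
    linarith
  rw [e1, e2, Finset.sum_sub_distrib, Finset.sum_sub_distrib, Finset.sum_const,
    Finset.sum_const, Nat.card_Ioc, Nat.card_Ioc, hsum b, hsum2]
  have hbk' : (b : ℝ) ≤ (k : ℝ) := Nat.cast_le.2 hbk
  have hcast : ((k - b : ℕ) : ℝ) = (k : ℝ) - (b : ℝ) := by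
    rw [Nat.cast_sub hbk]
  simp only [Nat.sub_zero, nsmul_eq_mul, hcast]
  ring

lemma Bsum (k b : ℕ) :
    ∑ c ∈ Finset.Icc 1 k, |(c : ℝ) - (b : ℝ)| ^ 2
      = (k : ℝ) ^ 3 / 3 + (k : ℝ) ^ 2 / 2 + (k : ℝ) / 6
        - 2 * (b : ℝ) * ((k : ℝ) ^ 2 / 2 + (k : ℝ) / 2) + (b : ℝ) ^ 2 * (k : ℝ) := by
  have e : ∀ c : ℕ, |(c : ℝ) - (b : ℝ)| ^ 2
      = (0 : ℝ) * (c : ℝ) ^ 4 + 0 * (c : ℝ) ^ 3 + 1 * (c : ℝ) ^ 2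
        + (-2 * (b : ℝ)) * (c : ℝ) + (b : ℝ) ^ 2 := fun c => by
    rw [sq_abs]; ring
  rw [Finset.sum_congr rfl fun c _ => e c, sum_quartic]
  ring

lemma triple_sum (k : ℕ) :
    ∑ a ∈ Finset.Icc 1 k, ∑ b ∈ Finset.Icc 1 k, ∑ c ∈ Finset.Icc 1 k,
        |(b : ℝ) - (a : ℝ)| * |(c : ℝ) - (b : ℝ)| ^ 2
      = (k : ℝ) ^ 2 * ((k : ℝ) - 1) * ((k : ℝ) + 1) * (11 * (k : ℝ) ^ 2 - 14) / 180 := by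
  rw [Finset.sum_comm]
  have key : ∀ b ∈ Finset.Icc 1 k,
      ∑ a ∈ Finset.Icc 1 k, ∑ c ∈ Finset.Icc 1 k,
          |(b : ℝ) - (a : ℝ)| * |(c : ℝ) - (b : ℝ)| ^ 2
        = (k : ℝ) * (b : ℝ) ^ 4 + (-2 * (k : ℝ) ^ 2 - 2 * (k : ℝ)) * (b : ℝ) ^ 3
          + (11 * (k : ℝ) ^ 3 / 6 + 3 * (k : ℝ) ^ 2 + 7 * (k : ℝ) / 6) * (b : ℝ) ^ 2
          + (-(5 * (k : ℝ) ^ 4 / 6 + 11 * (k : ℝ) ^ 3 / 6 + 7 * (k : ℝ) ^ 2 / 6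
              + (k : ℝ) / 6)) * (b : ℝ)
          + ((k : ℝ) ^ 5 / 6 + 5 * (k : ℝ) ^ 4 / 12 + (k : ℝ) ^ 3 / 3
              + (k : ℝ) ^ 2 / 12) := by
    intro b hb
    obtain ⟨hb1, hbk⟩ := Finset.mem_Icc.1 hb
    have hfac : ∑ a ∈ Finset.Icc 1 k, ∑ c ∈ Finset.Icc 1 k,
        |(b : ℝ) - (a : ℝ)| * |(c : ℝ) - (b : ℝ)| ^ 2
        = (∑ a ∈ Finset.Icc 1 k, |(b : ℝ) - (a : ℝ)|)
          * (∑ c ∈ Finset.Icc 1 k, |(c : ℝ) - (b : ℝ)| ^ 2) := by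
      rw [Finset.sum_mul_sum]
    rw [hfac, Asum hb1 hbk, Bsum]
    ring
  rw [Finset.sum_congr rfl key, sum_quartic]
  ring

end Helpers

theorem cross_moment_T012_uniform
    {Ω : Type*} [MeasurableSpace Ω] (μ : Measure Ω) [IsProbabilityMeasure μ]
    (k : ℕ) (hk : 2 ≤ k) (x : Fin 3 → Ω → ℕ)
    (hmeas : ∀ i, Measurable (x i))
    (hdist : ∀ i, Measure.map (x i) μ = unifMeasure k)
    (hindep : iIndepFun x μ) :
    ∫ ω, |(x 1 ω : ℝ) - (x 0 ω : ℝ)| * |(x 2 ω : ℝ) - (x 1 ω : ℝ)| ^ 2 ∂μ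
      = ((k : ℝ) - 1) * ((k : ℝ) + 1) * (11 * (k : ℝ) ^ 2 - 14) / (180 * (k : ℝ)) := by
  have hk0 : (k : ℝ) ≠ 0 := by positivity
  have hkE : ((k : ℝ≥0∞))⁻¹ ≠ ⊤ := by
    simp [ENNReal.inv_ne_top]
    omega
  have hx : ∀ i, AEMeasurable (x i) μ := fun i => (hmeas i).aemeasurable
  -- joint distribution
  have h12 : μ.map (fun ω => (x 1 ω, x 2 ω)) = (unifMeasure k).prod (unifMeasure k) := by
    have h := (indepFun_iff_map_prod_eq_prod_map_map (hx 1) (hx 2)).mp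
      (hindep.indepFun (show (1 : Fin 3) ≠ 2 by decide))
    rwa [hdist 1, hdist 2] at h
  have hSF : SFinite (unifMeasure k) := by
    unfold unifMeasure
    infer_instance
  have h012 : μ.map (fun ω => (x 0 ω, (x 1 ω, x 2 ω)))
      = (unifMeasure k).prod ((unifMeasure k).prod (unifMeasure k)) := by
    have hpair : IndepFun (x 0) (fun ω => (x 1 ω, x 2 ω)) μ :=
      (hindep.indepFun_prodMk hmeas 1 2 0 (by decide) (by decide)).symm
    have h := (indepFun_iff_map_prod_eq_prod_map_map (hx 0) ((hx 1).prodMk (hx 2))).mp hpair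
    rwa [hdist 0, h12] at h
  set g : ℕ × ℕ × ℕ → ℝ :=
    fun p => |(p.2.1 : ℝ) - (p.1 : ℝ)| * |(p.2.2 : ℝ) - (p.2.1 : ℝ)| ^ 2 with hg_def
  have hg : Measurable g := measurable_of_countable g
  have hT : Measurable fun ω => (x 0 ω, (x 1 ω, x 2 ω)) :=
    (hmeas 0).prodMk ((hmeas 1).prodMk (hmeas 2))
  have step1 : ∫ ω, |(x 1 ω : ℝ) - (x 0 ω : ℝ)| * |(x 2 ω : ℝ) - (x 1 ω : ℝ)| ^ 2 ∂μ
      = ∫ p, g p ∂(μ.map (fun ω => (x 0 ω, (x 1 ω, x 2 ω)))) := by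
    rw [integral_map hT.aemeasurable hg.aestronglyMeasurable]
  rw [step1, h012]
  have hprod : (unifMeasure k).prod ((unifMeasure k).prod (unifMeasure k))
      = ((k : ℝ≥0∞)⁻¹ * ((k : ℝ≥0∞)⁻¹ * (k : ℝ≥0∞)⁻¹)) •
          ∑ p ∈ Finset.Icc 1 k ×ˢ (Finset.Icc 1 k ×ˢ Finset.Icc 1 k), Measure.dirac p := by
    unfold unifMeasure
    rw [prod_smul_sum_dirac _ _ hkE, prod_smul_sum_dirac _ _ (by
      simp only [ne_eq, ENNReal.mul_eq_top]
      push_neg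
      constructor
      · rintro -; exact hkE
      · rintro h; exact absurd h hkE)]
  rw [hprod, integral_smul_sum_dirac]
  have htoReal : ((k : ℝ≥0∞)⁻¹ * ((k : ℝ≥0∞)⁻¹ * (k : ℝ≥0∞)⁻¹)).toReal
      = (k : ℝ)⁻¹ * ((k : ℝ)⁻¹ * (k : ℝ)⁻¹) := by
    simp [ENNReal.toReal_mul, ENNReal.toReal_inv]
  have hsum : ∑ p ∈ Finset.Icc 1 k ×ˢ (Finset.Icc 1 k ×ˢ Finset.Icc 1 k), g p
      = ∑ a ∈ Finset.Icc 1 k, ∑ b ∈ Finset.Icc 1 k, ∑ c ∈ Finset.Icc 1 k,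
          |(b : ℝ) - (a : ℝ)| * |(c : ℝ) - (b : ℝ)| ^ 2 := by
    rw [Finset.sum_product]
    refine Finset.sum_congr rfl fun a _ => ?_
    rw [Finset.sum_product]
  rw [htoReal, hsum, triple_sum k]
  field_simp
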